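/- For every ε > 0, every z ≥ 0, and α = e^{4ε} − 1, one has 1 + αz < (1 + α)^{z + ε} / e^{2ε²}. -/

import Mathlib

open Real

-- polynomial core: z*(1-z)*(q²-1) < (s/4)*(1 + z*(q²-1)), i.e. z*q² < (z+s/4)*D
lemma aux_poly (z q s : ℝ) (hz : 0 ≤ z) (hq1 : 1 < q) (hs : 0 < s)
    (htanh : q * (1 - s/4) < 1 + s/4) :
    z * q^2 < (z + s/4) * (1 + z * (q^2 - 1)) := by
  nlinarith [sq_nonneg (z*q - (1-z)),
    mul_pos (sub_pos.mpr htanh) (show (0:ℝ) < 1 + z*(q^2-1) by nlinarith [mul_nonneg hz (show (0:ℝ) ≤ q^2-1 by nlinarith)]),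
    mul_nonneg (sub_pos.mpr hq1).le (sq_nonneg (z*q - (1-z)))]

-- tanh x < x for x > 0, in the form we need
lemma aux_tanh (x : ℝ) (hx : 0 < x) : Real.exp (2*x) * (1 - x) < 1 + x := by
  have hd : ∀ y : ℝ, HasDerivAt (fun y : ℝ => y + 1 - (1 - y) * Real.exp (2*y))
      (1 + (2*y - 1) * Real.exp (2*y)) y := by
    intro y
    have h1 : HasDerivAt (fun y : ℝ => Real.exp (2*y)) (Real.exp (2*y) * 2) y := by
      simpa [Function.comp_def] using (Real.hasDerivAt_exp (2*y)).comp y ((hasDerivAt_id y).const_mul 2)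
    have h2 : HasDerivAt (fun y : ℝ => (1 - y) * Real.exp (2*y))
        ((0 - 1) * Real.exp (2*y) + (1 - y) * (Real.exp (2*y) * 2)) y :=
      ((hasDerivAt_const y (1:ℝ)).sub (hasDerivAt_id' y)).mul h1
    have h3 := ((hasDerivAt_id' y).add_const (1:ℝ)).sub h2
    exact h3.congr_deriv (by ring)
  have hmono : StrictMonoOn (fun y : ℝ => y + 1 - (1 - y) * Real.exp (2*y)) (Set.Ici (0:ℝ)) := by
    apply strictMonoOn_of_deriv_pos (convex_Ici 0)
    · exact Continuous.continuousOn (by continuity)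
    · intro y hy
      rw [interior_Ici] at hy
      rw [(hd y).deriv]
      rcases le_or_gt (1/2 : ℝ) y with h12 | h12
      · nlinarith [Real.exp_pos (2*y)]
      · have hne : (-(2*y) : ℝ) ≠ 0 := ne_of_lt (by simpa using hy)
        have he := Real.add_one_lt_exp hne
        have hpos : (0:ℝ) < Real.exp (2*y) := Real.exp_pos _
        have hmul : (1 - 2*y) * Real.exp (2*y) < 1 := by
          have h4 : (1 - 2*y) < Real.exp (-(2*y)) := by linarith
          calc (1 - 2*y) * Real.exp (2*y) < Real.exp (-(2*y)) * Real.exp (2*y) :=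
                mul_lt_mul_of_pos_right h4 hpos
            _ = 1 := by rw [← Real.exp_add]; simp
        nlinarith [hmul]
  have h0 := hmono (Set.self_mem_Ici) (Set.mem_Ici.mpr hx.le) hx
  simp only at h0
  norm_num at h0
  nlinarith [h0]

-- main lemma: Hoeffding-type bound for all z ≥ 0
lemma aux_main (z : ℝ) (hz : 0 ≤ z) (t : ℝ) (ht : 0 < t) :
    Real.log (1 + z * (Real.exp t - 1)) < z * t + t^2/8 := by
  have hD : ∀ s : ℝ, 0 ≤ s → (1:ℝ) ≤ 1 + z * (Real.exp s - 1) := by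
    intro s hs
    nlinarith [Real.one_le_exp hs]
  have hderiv : ∀ s : ℝ, 0 < s →
      HasDerivAt (fun s : ℝ => z * s + s^2/8 - Real.log (1 + z * (Real.exp s - 1)))
        (z + s/4 - z * Real.exp s / (1 + z * (Real.exp s - 1))) s := by
    intro s hs
    have hne : 1 + z * (Real.exp s - 1) ≠ 0 := by
      have := hD s hs.le; linarith
    have h1 : HasDerivAt (fun s : ℝ => 1 + z * (Real.exp s - 1)) (z * Real.exp s) s := by
      simpa using (((Real.hasDerivAt_exp s).sub_const 1).const_mul z).const_add 1
    have h2 : HasDerivAt (fun s : ℝ => Real.log (1 + z * (Real.exp s - 1)))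
        (z * Real.exp s / (1 + z * (Real.exp s - 1))) s := by
      simpa [div_eq_mul_inv, mul_comm, Function.comp_def] using (Real.hasDerivAt_log hne).comp s h1
    have h3 : HasDerivAt (fun s : ℝ => z * s + s^2/8)
        (z * 1 + (↑2 * s^(2-1)) / 8) s :=
      ((hasDerivAt_id' s).const_mul z).add ((hasDerivAt_pow 2 s).div_const 8)
    have h4 := h3.sub h2
    exact h4.congr_deriv (by norm_num; ring)
  have hmono : StrictMonoOn
      (fun s : ℝ => z * s + s^2/8 - Real.log (1 + z * (Real.exp s - 1))) (Set.Ici (0:ℝ)) := by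
    apply strictMonoOn_of_deriv_pos (convex_Ici 0)
    · apply ContinuousOn.sub (Continuous.continuousOn (by continuity))
      apply ContinuousOn.log (Continuous.continuousOn (by continuity))
      intro s hs
      have := hD s hs
      linarith
    · intro s hs
      rw [interior_Ici] at hs
      have hs' : (0:ℝ) < s := hs
      rw [(hderiv s hs').deriv]
      have hDs := hD s hs'.le
      have hDpos : (0:ℝ) < 1 + z * (Real.exp s - 1) := by linarith
      rw [sub_pos, div_lt_iff₀ hDpos]
      have hq1 : 1 < Real.exp (s/2) := by
        rw [show (1:ℝ) = Real.exp 0 by simp]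
        exact Real.exp_lt_exp.mpr (by linarith [hs'])
      have hqs : Real.exp s = (Real.exp (s/2))^2 := by
        rw [sq, ← Real.exp_add]; ring_nf
      have htanh : Real.exp (2*(s/4)) * (1 - s/4) < 1 + s/4 := aux_tanh (s/4) (by linarith [hs'])
      have htanh' : Real.exp (s/2) * (1 - s/4) < 1 + s/4 := by
        rwa [show 2*(s/4) = s/2 by ring] at htanh
      have key := aux_poly z (Real.exp (s/2)) s hz hq1 hs' htanh'
      rw [hqs]
      nlinarith [key]
  have h0 := hmono (Set.self_mem_Ici) (Set.mem_Ici.mpr ht.le) ht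
  simp only at h0
  norm_num at h0
  linarith

/-- The elementary inequality used in the proof of Hoeffding's bound:
for `ε > 0`, `z ≥ 0` and `α = e^{4ε} − 1`, one has
`1 + αz < (1 + α)^{z + ε} / e^{2ε²}`. -/
theorem hoeffding_aux_ineq (ε z α : ℝ) (hε : 0 < ε) (hz : 0 ≤ z)
    (hα : α = Real.exp (4 * ε) - 1) :
    1 + α * z < (1 + α) ^ (z + ε) / Real.exp (2 * ε ^ 2) := by
  have ht : 0 < 4 * ε := by linarith
  have hmain := aux_main z hz (4*ε) ht
  have hLpos : (0:ℝ) < 1 + α * z := by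
    have : (1:ℝ) ≤ Real.exp (4*ε) := Real.one_le_exp ht.le
    nlinarith [hα]
  have hrw : (1 + α) ^ (z + ε) = Real.exp (4 * ε * (z + ε)) := by
    rw [hα, show (1 + (Real.exp (4*ε) - 1)) = Real.exp (4*ε) by ring,
      Real.rpow_def_of_pos (Real.exp_pos _), Real.log_exp]
  rw [hrw, ← Real.exp_sub]
  calc 1 + α * z = Real.exp (Real.log (1 + α * z)) := (Real.exp_log hLpos).symm
    _ < Real.exp (4 * ε * (z + ε) - 2 * ε ^ 2) := by
        apply Real.exp_lt_exp.mpr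
        rw [hα]
        have : Real.log (1 + (Real.exp (4*ε) - 1) * z) = Real.log (1 + z * (Real.exp (4*ε) - 1)) := by
          ring_nf
        rw [this]
        nlinarith [hmain]
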